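/- For every integer L ≥ 2, the periodic Hamiltonian H maps the physical subspace 𝒲 into itself: if w ∈ 𝒲 then Hw ∈ 𝒲. -/

import Mathlib

open Matrix
open scoped Kronecker

noncomputable section

/-- π(σ): 3×3 matrix with rows (0,1,0),(0,0,1),(1,0,0). -/
def Smat : Matrix (Fin 3) (Fin 3) ℂ := !![0,1,0; 0,0,1; 1,0,0]

/-- π(τ): 3×3 matrix with rows (1,0,0),(0,0,1),(0,1,0). -/
def Tmat : Matrix (Fin 3) (Fin 3) ℂ := !![1,0,0; 0,0,1; 0,1,0]

/-- The representation π_{(3,+)} on group elements of D₃ = DihedralGroup 3,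
extended multiplicatively from π(σ) = Smat, π(τ) = Tmat.
Here `DihedralGroup.r i` = σ^i and `DihedralGroup.sr i` = τσ^i. -/
def pig : DihedralGroup 3 → Matrix (Fin 3) (Fin 3) ℂ
  | DihedralGroup.r i => Smat ^ i.val
  | DihedralGroup.sr i => Tmat * Smat ^ i.val

/-- The representation π_{(3,+)} on dual elements: π((σ^i)*) = 0 and
π((σ^i τ)*) = E^{i+1}_{i+1}.  Since σ^i τ = `DihedralGroup.sr (-i)`, the dual
of `sr j` acts as the matrix unit at position (-j).val. -/
def pidual : DihedralGroup 3 → Matrix (Fin 3) (Fin 3) ℂ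
  | DihedralGroup.r _ => 0
  | DihedralGroup.sr j =>
      Matrix.single ⟨(-j).val, ZMod.val_lt _⟩ ⟨(-j).val, ZMod.val_lt _⟩ 1

/-- The coproduct action Δ(g h*) on ℂ³⊗ℂ³. -/
def copr (g h : DihedralGroup 3) : Matrix (Fin 3 × Fin 3) (Fin 3 × Fin 3) ℂ :=
  ∑ k : DihedralGroup 3, (pig g * pidual (k⁻¹ * h)) ⊗ₖ (pig g * pidual k)

/-- The local two-site Hamiltonian 𝔥 = Σ_γ i(E^{γ(1)}_{γ(2)} ⊗ E^{γ(2)}_{γ(3)}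
− E^{γ(2)}_{γ(3)} ⊗ E^{γ(1)}_{γ(2)}), summed over permutations γ of {1,2,3}. -/
def hloc : Matrix (Fin 3 × Fin 3) (Fin 3 × Fin 3) ℂ :=
  ∑ γ : Equiv.Perm (Fin 3),
    Complex.I •
      ((Matrix.single (γ 0) (γ 1) (1 : ℂ)) ⊗ₖ (Matrix.single (γ 1) (γ 2) (1 : ℂ))
        - (Matrix.single (γ 1) (γ 2) (1 : ℂ)) ⊗ₖ (Matrix.single (γ 0) (γ 1) (1 : ℂ)))

/-- The L-fold coproduct action A(g,h) = Σ_{h_L⋯h₁ = h} ⊗_m π(g)π(h_m*)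
on (ℂ³)^{⊗L}. -/
def Afold (L : ℕ) (g h : DihedralGroup 3) :
    Matrix (Fin L → Fin 3) (Fin L → Fin 3) ℂ :=
  ∑ f : Fin L → DihedralGroup 3,
    if ((List.finRange L).reverse.map f).prod = h then
      Matrix.of (fun α β => ∏ m, (pig g * pidual (f m)) (α m) (β m))
    else 0

/-- The physical subspace 𝒲 = {w : A(g,h) w = δ_{h,e} w for all g,h}. -/
def physSpace (L : ℕ) : Set ((Fin L → Fin 3) → ℂ) :=
  {w | ∀ g h : DihedralGroup 3,
    (Afold L g h).mulVec w = (if h = 1 then (1 : ℂ) else 0) • w}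

/-- Cyclic successor on Fin L. -/
def cyc {L : ℕ} (m : Fin L) : Fin L := ⟨(m.val + 1) % L, Nat.mod_lt _ m.pos⟩

/-- The translation operator 𝒯, determined by
𝒯(v₁⊗v₂⊗⋯⊗v_L) = v_L⊗v₁⊗⋯⊗v_{L−1}. -/
def transOp (L : ℕ) (w : (Fin L → Fin 3) → ℂ) : (Fin L → Fin 3) → ℂ :=
  fun α => w (fun m => α (cyc m))

/-- The two-site Hamiltonian 𝔥_{k,l}, acting as 𝔥 on the (ordered) pair of
tensor factors (k,l) and as the identity elsewhere. -/
def hTwo (L : ℕ) (k l : Fin L) : Matrix (Fin L → Fin 3) (Fin L → Fin 3) ℂ :=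
  Matrix.of fun α β =>
    hloc (α k, α l) (β k, β l) *
      ∏ m ∈ Finset.univ \ {k, l}, (if α m = β m then (1 : ℂ) else 0)

/-- The periodic Hamiltonian H = Σ_{k=1}^{L−1} 𝔥_{k,k+1} + 𝔥_{L,1}; written
cyclically as Σ_{k∈Fin L} 𝔥_{k,k+1 mod L}. -/
def Ham (L : ℕ) : Matrix (Fin L → Fin 3) (Fin L → Fin 3) ℂ :=
  ∑ k : Fin L, hTwo L k (cyc k)



/-- reflection associated to a site value -/
def sOf (a : Fin 3) : DihedralGroup 3 := DihedralGroup.sr (-(a.val : ZMod 3))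

lemma pidual_apply (x : DihedralGroup 3) (i j : Fin 3) :
    pidual x i j = if x = sOf j ∧ i = j then 1 else 0 := by
  cases x with
  | r t => simp [pidual, sOf]
  | sr t =>
      have key : ∀ (t : ZMod 3) (i j : Fin 3),
          (((⟨(-t).val, ZMod.val_lt _⟩ : Fin 3) = i ∧ (⟨(-t).val, ZMod.val_lt _⟩ : Fin 3) = j))
          ↔ (DihedralGroup.sr t = sOf j ∧ i = j) := by decide
      simp only [pidual, Matrix.single, Matrix.of_apply]
      rw [if_congr (key t i j) rfl rfl]

lemma pig_mul_pidual_apply (g : DihedralGroup 3) (x : DihedralGroup 3) (i j : Fin 3) :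
    (pig g * pidual x) i j = if x = sOf j then pig g i j else 0 := by
  rw [Matrix.mul_apply]
  rw [Finset.sum_eq_single j]
  · rw [pidual_apply]
    by_cases h : x = sOf j <;> simp [h]
  · intro c _ hc
    rw [pidual_apply]
    simp [hc]
  · simp

def Gmat (L : ℕ) (g : DihedralGroup 3) : Matrix (Fin L → Fin 3) (Fin L → Fin 3) ℂ :=
  Matrix.of fun α β => ∏ m, pig g (α m) (β m)

def flux (L : ℕ) (α : Fin L → Fin 3) : DihedralGroup 3 :=
  ((List.finRange L).reverse.map (fun m => sOf (α m))).prod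

lemma Afold_apply (L : ℕ) (g h : DihedralGroup 3) (α β : Fin L → Fin 3) :
    Afold L g h α β = if flux L β = h then Gmat L g α β else 0 := by
  rw [Afold, Matrix.sum_apply]
  have hterm : ∀ f : Fin L → DihedralGroup 3,
      (if ((List.finRange L).reverse.map f).prod = h then
        Matrix.of (fun α β => ∏ m, (pig g * pidual (f m)) (α m) (β m))
      else 0) α β
      = if f = (fun m => sOf (β m)) then (if flux L β = h then Gmat L g α β else 0) else 0 := by
    intro f
    rw [apply_ite (fun M : Matrix (Fin L → Fin 3) (Fin L → Fin 3) ℂ => M α β)]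
    simp only [Matrix.zero_apply, Matrix.of_apply]
    have hprod : (∏ m, (pig g * pidual (f m)) (α m) (β m))
        = if f = (fun m => sOf (β m)) then Gmat L g α β else 0 := by
      calc (∏ m, (pig g * pidual (f m)) (α m) (β m))
          = ∏ m, (pig g (α m) (β m) * if f m = sOf (β m) then 1 else 0) := by
            apply Finset.prod_congr rfl; intro m _
            rw [pig_mul_pidual_apply]
            by_cases hm : f m = sOf (β m) <;> simp [hm]
        _ = (∏ m, pig g (α m) (β m)) * ∏ m, (if f m = sOf (β m) then (1:ℂ) else 0) :=
            Finset.prod_mul_distrib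
        _ = (∏ m, pig g (α m) (β m)) * if (∀ m, f m = sOf (β m)) then 1 else 0 := by
            rw [Fintype.prod_boole]
            congr
        _ = if f = (fun m => sOf (β m)) then Gmat L g α β else 0 := by
            by_cases hf : f = fun m => sOf (β m)
            · rw [if_pos hf, if_pos (fun m => congrFun hf m), mul_one]; rfl
            · rw [if_neg hf, if_neg (fun hall => hf (funext hall)), mul_zero]
    rw [hprod]
    by_cases hf : f = (fun m => sOf (β m))
    · subst hf
      rw [if_pos rfl,
        show ((List.finRange L).reverse.map (fun m => sOf (β m))).prod = flux L β from rfl,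
        if_pos rfl]
    · simp [hf]
  rw [Finset.sum_congr rfl (fun f _ => hterm f)]
  rw [Finset.sum_ite_eq' Finset.univ (fun m => sOf (β m))
    (fun _ => if flux L β = h then Gmat L g α β else 0)]
  simp

def permMat (s : Equiv.Perm (Fin 3)) : Matrix (Fin 3) (Fin 3) ℂ :=
  Matrix.of fun i j => if i = s j then 1 else 0

lemma permMat_one : permMat 1 = 1 := by
  ext i j
  simp [permMat, Matrix.one_apply]
  split_ifs <;> simp_all

lemma permMat_mul (s t : Equiv.Perm (Fin 3)) : permMat s * permMat t = permMat (s * t) := by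
  ext i j
  rw [Matrix.mul_apply]
  rw [Finset.sum_eq_single (t j)]
  · simp [permMat]
    split_ifs <;> simp_all
  · intro c _ hc
    simp [permMat, hc, Ne.symm hc]
  · simp

lemma permMat_pow (s : Equiv.Perm (Fin 3)) (n : ℕ) : permMat s ^ n = permMat (s ^ n) := by
  induction n with
  | zero => simp [permMat_one]
  | succ n ih => rw [pow_succ, pow_succ, ih, permMat_mul]

def sPerm : Equiv.Perm (Fin 3) :=
  ⟨fun j => ![2, 0, 1] j, fun j => ![1, 2, 0] j, by decide, by decide⟩

def tPerm : Equiv.Perm (Fin 3) :=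
  ⟨fun j => ![0, 2, 1] j, fun j => ![0, 2, 1] j, by decide, by decide⟩

lemma Smat_eq : Smat = permMat sPerm := by
  ext i j
  fin_cases i <;> fin_cases j <;> simp [Smat, permMat, sPerm, Matrix.vecHead, Matrix.vecTail]

lemma Tmat_eq : Tmat = permMat tPerm := by
  ext i j
  fin_cases i <;> fin_cases j <;> simp [Tmat, permMat, tPerm, Matrix.vecHead, Matrix.vecTail]

/-- the permutation underlying `pig g` -/
def pperm : DihedralGroup 3 → Equiv.Perm (Fin 3)
  | DihedralGroup.r i => sPerm ^ i.val
  | DihedralGroup.sr i => tPerm * sPerm ^ i.val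

lemma pig_eq_permMat (g : DihedralGroup 3) : pig g = permMat (pperm g) := by
  cases g with
  | r i => rw [pig, pperm, Smat_eq, permMat_pow]
  | sr i => rw [pig, pperm, Smat_eq, Tmat_eq, permMat_pow, permMat_mul]

lemma hloc_perm_inv (s : Equiv.Perm (Fin 3)) (a b c d : Fin 3) :
    hloc (s a, s b) (s c, s d) = hloc (a, b) (c, d) := by
  unfold hloc
  rw [Matrix.sum_apply, Matrix.sum_apply]
  refine Fintype.sum_equiv (Equiv.mulLeft s⁻¹) _ _ (fun γ => ?_)
  simp only [Equiv.coe_mulLeft, Equiv.Perm.mul_apply, Matrix.smul_apply, Matrix.sub_apply,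
    Matrix.kroneckerMap_apply, Matrix.single, Matrix.of_apply,
    Equiv.Perm.inv_eq_iff_eq, Equiv.Perm.eq_inv_iff_eq]

lemma Gmat_apply (L : ℕ) (g : DihedralGroup 3) (α β : Fin L → Fin 3) :
    Gmat L g α β = if α = (fun m => pperm g (β m)) then 1 else 0 := by
  rw [Gmat]
  simp only [Matrix.of_apply, pig_eq_permMat, permMat, Fintype.prod_boole]
  by_cases h : α = fun m => pperm g (β m)
  · rw [if_pos (fun m => congrFun h m), if_pos h]
  · rw [if_neg (fun hall => h (funext hall)), if_neg h]

lemma Gmat_comm_hTwo (L : ℕ) (g : DihedralGroup 3) (k l : Fin L) :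
    Gmat L g * hTwo L k l = hTwo L k l * Gmat L g := by
  set p := pperm g
  ext α β
  rw [Matrix.mul_apply, Matrix.mul_apply]
  rw [Finset.sum_eq_single (fun m => p⁻¹ (α m))]
  rotate_left
  · intro γ _ hγ
    rw [Gmat_apply]
    rw [if_neg, zero_mul]
    intro hc
    exact hγ (by funext m; rw [congrFun hc m]; exact (p.symm_apply_apply _).symm)
  · simp
  rw [Finset.sum_eq_single (fun m => p (β m))]
  rotate_left
  · intro γ _ hγ
    rw [Gmat_apply, if_neg hγ, mul_zero]
  · simp
  rw [Gmat_apply, if_pos (by funext m; exact (p.apply_symm_apply _).symm), one_mul,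
    Gmat_apply, if_pos rfl, mul_one]
  show hTwo L k l (fun m => p⁻¹ (α m)) β = hTwo L k l α (fun m => p (β m))
  rw [hTwo]
  simp only [Matrix.of_apply]
  congr 1
  · have := hloc_perm_inv p (p⁻¹ (α k)) (p⁻¹ (α l)) (β k) (β l)
    simp only [Equiv.apply_symm_apply, Equiv.Perm.inv_def] at this
    rw [this, Equiv.Perm.inv_def]
  · apply Finset.prod_congr rfl
    intro m _
    congr 1
    simp [Equiv.Perm.inv_eq_iff_eq, Equiv.symm_apply_eq]

lemma fin3_aux : ∀ p q r : Fin 3, p ≠ q → q ≠ r → p ≠ r →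
    ((p.val : ZMod 3) - q.val = (q.val : ZMod 3) - r.val ∧
     (q.val : ZMod 3) - p.val = (r.val : ZMod 3) - q.val) := by decide

lemma hloc_support {a b c d : Fin 3} (h : hloc (a, b) (c, d) ≠ 0) :
    (a.val : ZMod 3) - b.val = (c.val : ZMod 3) - d.val := by
  by_contra hne
  apply h
  unfold hloc
  rw [Matrix.sum_apply]
  apply Finset.sum_eq_zero
  intro γ _
  simp only [Matrix.smul_apply, Matrix.sub_apply, Matrix.kroneckerMap_apply,
    Matrix.single, Matrix.of_apply]
  have h01 : γ 0 ≠ γ 1 := fun hh => by exact absurd (γ.injective hh) (by decide)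
  have h12 : γ 1 ≠ γ 2 := fun hh => by exact absurd (γ.injective hh) (by decide)
  have h02 : γ 0 ≠ γ 2 := fun hh => by exact absurd (γ.injective hh) (by decide)
  have t1 : ((if γ 0 = a ∧ γ 1 = c then (1:ℂ) else 0) * if γ 1 = b ∧ γ 2 = d then (1:ℂ) else 0) = 0 := by
    by_cases h1 : γ 0 = a ∧ γ 1 = c
    · by_cases h2 : γ 1 = b ∧ γ 2 = d
      · exfalso
        obtain ⟨ha, hc⟩ := h1; obtain ⟨hb, hd⟩ := h2
        subst ha; subst hb; subst hc; subst hd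
        exact hne (fin3_aux _ _ _ h01 h12 h02).1
      · rw [if_neg h2, mul_zero]
    · rw [if_neg h1, zero_mul]
  have t2 : ((if γ 1 = a ∧ γ 2 = c then (1:ℂ) else 0) * if γ 0 = b ∧ γ 1 = d then (1:ℂ) else 0) = 0 := by
    by_cases h1 : γ 1 = a ∧ γ 2 = c
    · by_cases h2 : γ 0 = b ∧ γ 1 = d
      · exfalso
        obtain ⟨ha, hc⟩ := h1; obtain ⟨hb, hd⟩ := h2
        subst ha; subst hb; subst hc; subst hd
        exact hne (fin3_aux _ _ _ h01 h12 h02).2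
      · rw [if_neg h2, mul_zero]
    · rw [if_neg h1, zero_mul]
  rw [t1, t2, sub_zero, smul_zero]

lemma sOf_pair {a b c d : Fin 3}
    (h : (a.val : ZMod 3) - b.val = (c.val : ZMod 3) - d.val) :
    sOf b * sOf a = sOf d * sOf c := by
  simp only [sOf, DihedralGroup.sr_mul_sr]
  congr 1
  linear_combination -h

lemma sOf_mid_r {a b c d : Fin 3} (t : ZMod 3)
    (h : (a.val : ZMod 3) - b.val = (c.val : ZMod 3) - d.val) :
    sOf a * (DihedralGroup.r t * sOf b) = sOf c * (DihedralGroup.r t * sOf d) := by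
  simp only [sOf, DihedralGroup.r_mul_sr, DihedralGroup.sr_mul_sr]
  congr 1
  linear_combination h

lemma sOf_mid_sr (a b : Fin 3) (t : ZMod 3) :
    sOf a * (DihedralGroup.sr t * sOf b) ≠ 1 := by
  simp only [sOf, DihedralGroup.sr_mul_sr, DihedralGroup.sr_mul_r, DihedralGroup.one_def]
  exact fun hh => by cases hh

def prodR (u : ℕ → DihedralGroup 3) (n : ℕ) : DihedralGroup 3 :=
  ((List.range n).reverse.map u).prod

lemma prodR_succ (u : ℕ → DihedralGroup 3) (n : ℕ) :
    prodR u (n + 1) = u n * prodR u n := by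
  simp [prodR, List.range_succ]

lemma prodR_congr {u v : ℕ → DihedralGroup 3} {n : ℕ} (h : ∀ m < n, u m = v m) :
    prodR u n = prodR v n := by
  induction n with
  | zero => rfl
  | succ n ih =>
      rw [prodR_succ, prodR_succ, h n (Nat.lt_succ_self n),
        ih (fun m hm => h m (hm.trans (Nat.lt_succ_self n)))]

lemma prodR_shift (u : ℕ → DihedralGroup 3) (n : ℕ) :
    prodR u (n + 1) = prodR (fun m => u (m + 1)) n * u 0 := by
  simp [prodR, List.range_succ_eq_map, List.map_reverse, List.map_map, Function.comp_def]

def uFun (L : ℕ) (α : Fin L → Fin 3) (n : ℕ) : DihedralGroup 3 :=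
  if h : n < L then sOf (α ⟨n, h⟩) else 1

lemma flux_eq_prodR (L : ℕ) (α : Fin L → Fin 3) : flux L α = prodR (uFun L α) L := by
  rw [flux, prodR, ← (show (List.finRange L).map Fin.val = List.range L from
    List.ext_getElem (by simp) (fun i _ _ => by simp)), List.map_reverse, List.map_reverse, List.map_map]
  congr 1
  congr 1
  apply List.map_congr_left
  intro m _
  simp [Function.comp, uFun, m.isLt]

lemma prodR_pair {u v : ℕ → DihedralGroup 3} {k n : ℕ}
    (hoff : ∀ m, m ≠ k → m ≠ k + 1 → u m = v m)
    (hpair : u (k + 1) * u k = v (k + 1) * v k)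
    (hkn : k + 1 < n) : prodR u n = prodR v n := by
  have base : prodR u (k + 2) = prodR v (k + 2) := by
    rw [show k + 2 = (k + 1) + 1 from rfl, prodR_succ, prodR_succ, prodR_succ, prodR_succ,
      ← mul_assoc, ← mul_assoc, hpair,
      prodR_congr (fun m hm => hoff m (by omega) (by omega))]
  have main : ∀ N, k + 2 ≤ N → prodR u N = prodR v N := by
    intro N hN
    induction N, hN using Nat.le_induction with
    | base => exact base
    | succ N hN ih => rw [prodR_succ, prodR_succ, ih, hoff N (by omega) (by omega)]
  exact main n (by omega)

set_option maxHeartbeats 2000000 in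
lemma flux_pres (L : ℕ) (hL : 2 ≤ L) (k : Fin L) (α β : Fin L → Fin 3)
    (hoff : ∀ m, m ≠ k → m ≠ cyc k → α m = β m)
    (hdif : ((α k).val : ZMod 3) - (α (cyc k)).val = ((β k).val : ZMod 3) - (β (cyc k)).val)
    (h1 : flux L β = 1) : flux L α = 1 := by
  by_cases hcase : k.val + 1 < L
  · have hc : (cyc k) = ⟨k.val + 1, hcase⟩ := by
      simp [cyc, Nat.mod_eq_of_lt hcase]
    have heq : flux L α = flux L β := by
      rw [flux_eq_prodR, flux_eq_prodR]
      apply prodR_pair (k := k.val) _ _ hcase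
      · intro m hm hm1
        unfold uFun
        split
        · next h =>
            congr 1
            apply hoff
            · exact fun hh => hm (congrArg Fin.val hh)
            · exact fun hh => hm1 (by rw [hc] at hh; exact congrArg Fin.val hh)
        · rfl
      · simp only [uFun, dif_pos hcase, dif_pos k.isLt]
        rw [show (⟨k.val + 1, hcase⟩ : Fin L) = cyc k from hc.symm, Fin.eta]
        exact sOf_pair hdif
    rw [heq, h1]
  · have hk : k.val = L - 1 := by have := k.isLt; omega
    have hc0 : cyc k = ⟨0, by omega⟩ := by
      simp only [cyc, hk]
      congr 1
      rw [Nat.sub_add_cancel (by omega), Nat.mod_self]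
    obtain ⟨n, hn⟩ : ∃ n, L = n + 2 := ⟨L - 2, by omega⟩
    subst hn
    have hkn : k = ⟨n + 1, by omega⟩ := by
      apply Fin.ext; show k.val = n + 1; omega
    have decomp : ∀ γ : Fin (n + 2) → Fin 3,
        flux (n + 2) γ = sOf (γ k) * (prodR (fun m => uFun (n + 2) γ (m + 1)) n * sOf (γ (cyc k))) := by
      intro γ
      rw [flux_eq_prodR,
        show prodR (uFun (n + 2) γ) (n + 2) = prodR (uFun (n + 2) γ) ((n + 1) + 1) by norm_num,
        prodR_succ, prodR_shift]
      have e1 : uFun (n + 2) γ (n + 1) = sOf (γ k) := by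
        unfold uFun
        rw [dif_pos (show n + 1 < n + 2 by omega)]
        exact congrArg (fun x => sOf (γ x)) hkn.symm
      have e2 : uFun (n + 2) γ 0 = sOf (γ (cyc k)) := by
        unfold uFun
        rw [dif_pos (show 0 < n + 2 by omega)]
        exact congrArg (fun x => sOf (γ x)) (by rw [hc0])
      rw [e1, e2]
    have mideq : prodR (fun m => uFun (n + 2) α (m + 1)) n = prodR (fun m => uFun (n + 2) β (m + 1)) n := by
      apply prodR_congr
      intro m hm
      unfold uFun
      split
      · next h =>
          congr 1
          apply hoff
          · rw [hkn]; exact fun hh => by have := congrArg Fin.val hh; simp at this; omega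
          · rw [hc0]; exact fun hh => by have := congrArg Fin.val hh; simp at this
      · rfl
    rw [decomp β] at h1
    rw [decomp α, mideq]
    rcases hM : prodR (fun m => uFun (n + 2) β (m + 1)) n with t | t
    · rw [hM] at h1
      rw [sOf_mid_r t hdif]
      exact h1
    · rw [hM] at h1
      exact absurd h1 (sOf_mid_sr _ _ t)

lemma pig_one : pig 1 = 1 := by
  have : (1 : DihedralGroup 3) = DihedralGroup.r 0 := DihedralGroup.one_def
  rw [this]
  show Smat ^ (0 : ZMod 3).val = 1
  rw [ZMod.val_zero, pow_zero]

lemma Gmat_one (L : ℕ) : Gmat L 1 = 1 := by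
  ext α β
  rw [Gmat]
  simp only [Matrix.of_apply, pig_one, Matrix.one_apply, Fintype.prod_boole]
  by_cases h : α = β
  · rw [if_pos (fun m => congrFun h m), if_pos h]
  · rw [if_neg (fun hall => h (funext hall)), if_neg h]

lemma Afold_one_mulVec (L : ℕ) (h : DihedralGroup 3) (v : (Fin L → Fin 3) → ℂ)
    (α : Fin L → Fin 3) :
    (Afold L 1 h).mulVec v α = if flux L α = h then v α else 0 := by
  rw [Matrix.mulVec, dotProduct]
  rw [Finset.sum_eq_single α]
  · rw [Afold_apply, Gmat_one, Matrix.one_apply_eq]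
    by_cases hh : flux L α = h <;> simp [hh]
  · intro β _ hβ
    rw [Afold_apply, Gmat_one, Matrix.one_apply_ne (Ne.symm hβ)]
    simp
  · simp

lemma Afold_factor (L : ℕ) (g h : DihedralGroup 3) :
    Afold L g h = Gmat L g * Afold L 1 h := by
  ext α β
  rw [Afold_apply, Matrix.mul_apply]
  rw [Finset.sum_eq_single β]
  · rw [Afold_apply, Gmat_one, Matrix.one_apply_eq]
    by_cases hh : flux L β = h <;> simp [hh]
  · intro γ _ hγ
    rw [Afold_apply, Gmat_one, Matrix.one_apply_ne hγ]
    simp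
  · simp

theorem hamiltonian_preserves_physical (L : ℕ) (hL : 2 ≤ L)
    (w : (Fin L → Fin 3) → ℂ) (hw : w ∈ physSpace L) :
    (Ham L).mulVec w ∈ physSpace L := by
  have hWsupp : ∀ α, flux L α ≠ 1 → w α = 0 := by
    intro α hα
    have h0 := congrFun (hw 1 (flux L α)) α
    rw [Afold_one_mulVec, if_pos rfl, Pi.smul_apply, if_neg hα, zero_smul] at h0
    exact h0
  have hWinv : ∀ g, (Gmat L g).mulVec w = w := by
    intro g
    funext α
    have hsum : ∑ h : DihedralGroup 3, (Afold L g h).mulVec w α = w α := by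
      calc ∑ h : DihedralGroup 3, (Afold L g h).mulVec w α
          = ∑ h : DihedralGroup 3, if h = 1 then w α else 0 := by
            apply Finset.sum_congr rfl
            intro h _
            rw [hw g h, Pi.smul_apply]
            by_cases hh : h = 1 <;> simp [hh]
        _ = w α := by rw [Finset.sum_ite_eq' Finset.univ (1 : DihedralGroup 3) (fun _ => w α)]; simp
    rw [← hsum]
    rw [Matrix.mulVec, dotProduct]
    have swap : ∀ h : DihedralGroup 3, (Afold L g h).mulVec w α
        = ∑ β, (if flux L β = h then Gmat L g α β else 0) * w β := by
      intro h
      rw [Matrix.mulVec, dotProduct]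
      exact Finset.sum_congr rfl (fun β _ => by rw [Afold_apply])
    rw [Finset.sum_congr rfl (fun h (_ : h ∈ Finset.univ) => swap h), Finset.sum_comm]
    apply Finset.sum_congr rfl
    intro β _
    rw [← Finset.sum_mul]
    congr 1
    rw [Finset.sum_ite_eq Finset.univ (flux L β) (fun _ => Gmat L g α β)]
    simp
  set v := (Ham L).mulVec w with hv
  have hVsupp : ∀ α, flux L α ≠ 1 → v α = 0 := by
    intro α hα
    rw [hv, Matrix.mulVec, dotProduct]
    apply Finset.sum_eq_zero
    intro β _
    by_cases hβ : flux L β = 1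
    · rw [Ham, Matrix.sum_apply]
      rw [Finset.sum_eq_zero, zero_mul]
      intro k _
      by_contra hne
      have hl : hloc (α k, α (cyc k)) (β k, β (cyc k)) ≠ 0 := left_ne_zero_of_mul hne
      have hp : (∏ m ∈ Finset.univ \ {k, cyc k}, if α m = β m then (1:ℂ) else 0) ≠ 0 :=
        right_ne_zero_of_mul hne
      have hoff : ∀ m, m ≠ k → m ≠ cyc k → α m = β m := by
        intro m hm1 hm2
        have hmem : m ∈ Finset.univ \ {k, cyc k} := by
          simp [Finset.mem_sdiff, hm1, hm2]
        have := Finset.prod_ne_zero_iff.mp hp m hmem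
        by_contra hne2
        rw [if_neg hne2] at this
        exact this rfl
      exact hα (flux_pres L hL k α β hoff (hloc_support hl) hβ)
    · rw [hWsupp β hβ, mul_zero]
  have hVinv : ∀ g, (Gmat L g).mulVec v = v := by
    intro g
    have hcomm : Gmat L g * Ham L = Ham L * Gmat L g := by
      rw [Ham, Matrix.mul_sum, Matrix.sum_mul]
      exact Finset.sum_congr rfl (fun k _ => Gmat_comm_hTwo L g k (cyc k))
    rw [hv, Matrix.mulVec_mulVec, hcomm, ← Matrix.mulVec_mulVec, hWinv g]
  intro g h
  have hP : (Afold L 1 h).mulVec v = (if h = 1 then (1:ℂ) else 0) • v := by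
    funext α
    rw [Afold_one_mulVec, Pi.smul_apply]
    by_cases hfl : flux L α = 1
    · rw [hfl]
      by_cases hh : h = 1
      · rw [if_pos hh.symm, if_pos hh, one_smul]
      · rw [if_neg (fun hx => hh hx.symm), if_neg hh, zero_smul]
    · rw [hVsupp α hfl]
      by_cases hh : flux L α = h <;> by_cases h1 : h = 1 <;> simp [hh, h1]
  rw [Afold_factor, ← Matrix.mulVec_mulVec, hP, Matrix.mulVec_smul, hVinv g]

end
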